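/- On the open subset of R³ where x₁,x₂,x₃ ≠ 0, let K be the (1,1)-tensor field with components as in the Smorodinski–Winternitz I family: K = [[b₄x₂²+b₅x₃²+b₁, −b₄x₁x₂, −b₅x₁x₃], [−b₄x₁x₂, b₄x₁²+b₆x₃²+b₂, −b₆x₂x₃], [−b₅x₁x₃, −b₆x₂x₃, b₅x₁²+b₆x₂²+b₃]]. Then for each r ∈ {0,1,2,3}, the 1-form K*(du^(r)) is closed, where u^(0) = x₁²+x₂²+x₃², u^(1) = 1/x₁², u^(2) = 1/x₂², u^(3) = 1/x₃². -/

import Mathlib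

open scoped BigOperators

/-- Partial derivative of a function on ℝⁿ in the `i`-th coordinate direction. -/
noncomputable def pd {n : ℕ} (i : Fin n) (f : (Fin n → ℝ) → ℝ) : (Fin n → ℝ) → ℝ :=
  fun x => fderiv ℝ f x (Pi.single i 1)

/-- Nijenhuis tensor of a (1,1)-tensor field `A` on flat ℝⁿ. -/
noncomputable def nijenhuis {n : ℕ} (A : Fin n → Fin n → (Fin n → ℝ) → ℝ)
    (i j k : Fin n) (x : Fin n → ℝ) : ℝ :=
  ∑ a, (pd a (A i k) x * A a j x - pd a (A i j) x * A a k x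
    + (pd k (A a j) x - pd j (A a k) x) * A i a x)

/-- Haantjes tensor of a (1,1)-tensor field `A` on flat ℝⁿ. -/
noncomputable def haantjes {n : ℕ} (A : Fin n → Fin n → (Fin n → ℝ) → ℝ)
    (i j k : Fin n) (x : Fin n → ℝ) : ℝ :=
  ∑ a, ∑ b, (nijenhuis A b j k x * A i a x * A a b x
    + nijenhuis A i a b x * A a j x * A b k x
    - A i a x * (nijenhuis A a b k x * A b j x + nijenhuis A a j b x * A b k x))

/-- The Smorodinski–Winternitz I family of (1,1)-tensor fields on ℝ³. -/
noncomputable def KSWI (b₁ b₂ b₃ b₄ b₅ b₆ : ℝ) (x : Fin 3 → ℝ) :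
    Matrix (Fin 3) (Fin 3) ℝ :=
  !![b₄ * (x 1)^2 + b₅ * (x 2)^2 + b₁, -(b₄ * x 0 * x 1), -(b₅ * x 0 * x 2);
     -(b₄ * x 0 * x 1), b₄ * (x 0)^2 + b₆ * (x 2)^2 + b₂, -(b₆ * x 1 * x 2);
     -(b₅ * x 0 * x 2), -(b₆ * x 1 * x 2), b₅ * (x 0)^2 + b₆ * (x 1)^2 + b₃]

/-- The four potentials `u⁰ = Σ xₖ²`, `u^(m) = 1/xₘ²`. -/
noncomputable def uSWI : Fin 4 → (Fin 3 → ℝ) → ℝ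
  | 0 => fun x => (x 0)^2 + (x 1)^2 + (x 2)^2
  | 1 => fun x => 1 / (x 0)^2
  | 2 => fun x => 1 / (x 1)^2
  | 3 => fun x => 1 / (x 2)^2

/-! ### Auxiliary machinery -/

noncomputable def prj (i : Fin 3) : (Fin 3 → ℝ) →L[ℝ] ℝ :=
  ContinuousLinearMap.proj (R := ℝ) (φ := fun _ : Fin 3 => ℝ) i

lemma hasF_coord (i : Fin 3) (x : Fin 3 → ℝ) : HasFDerivAt (fun y : Fin 3 → ℝ => y i) (prj i) x :=
  (prj i).hasFDerivAt

lemma hasF_zpow (i : Fin 3) (a : ℤ) (x : Fin 3 → ℝ) (h : x i ≠ 0) :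
    HasFDerivAt (fun y : Fin 3 → ℝ => (y i) ^ a) (((a : ℝ) * (x i) ^ (a - 1)) • prj i) x :=
  by have := (hasDerivAt_zpow a (x i) (Or.inl h)).comp_hasFDerivAt x (hasF_coord i x); exact this

noncomputable def mon (a b c : ℤ) (y : Fin 3 → ℝ) : ℝ := (y 0) ^ a * (y 1) ^ b * (y 2) ^ c

noncomputable def Lmon (a b c : ℤ) (x : Fin 3 → ℝ) : (Fin 3 → ℝ) →L[ℝ] ℝ :=
  ((a:ℝ) * (x 0)^(a-1) * (x 1)^b * (x 2)^c) • prj 0 +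
  ((b:ℝ) * (x 0)^a * (x 1)^(b-1) * (x 2)^c) • prj 1 +
  ((c:ℝ) * (x 0)^a * (x 1)^b * (x 2)^(c-1)) • prj 2

lemma hasF_mon (a b c : ℤ) (x : Fin 3 → ℝ) (hx : ∀ i, x i ≠ 0) :
    HasFDerivAt (mon a b c) (Lmon a b c x) x := by
  have h := ((hasF_zpow 0 a x (hx 0)).mul (hasF_zpow 1 b x (hx 1))).mul (hasF_zpow 2 c x (hx 2))
  refine h.congr_fderiv ?_
  ext y
  simp [prj, Lmon, smul_smul]
  ring

noncomputable def D (k : Fin 3) (a b c : ℤ) (x : Fin 3 → ℝ) : ℝ :=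
  if k = 0 then (a:ℝ) * (x 0)^(a-1) * (x 1)^b * (x 2)^c
  else if k = 1 then (b:ℝ) * (x 0)^a * (x 1)^(b-1) * (x 2)^c
  else (c:ℝ) * (x 0)^a * (x 1)^b * (x 2)^(c-1)

noncomputable def comb (c1 : ℝ) (a1 b1 d1 : ℤ) (c2 : ℝ) (a2 b2 d2 : ℤ)
    (c3 : ℝ) (a3 b3 d3 : ℤ) (y : Fin 3 → ℝ) : ℝ :=
  c1 * mon a1 b1 d1 y + c2 * mon a2 b2 d2 y + c3 * mon a3 b3 d3 y

lemma pd_comb {c1 : ℝ} {a1 b1 d1 : ℤ} {c2 : ℝ} {a2 b2 d2 : ℤ} {c3 : ℝ} {a3 b3 d3 : ℤ}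
    (k : Fin 3) (x : Fin 3 → ℝ) (hx : ∀ i, x i ≠ 0) :
    pd k (comb c1 a1 b1 d1 c2 a2 b2 d2 c3 a3 b3 d3) x
      = c1 * D k a1 b1 d1 x + c2 * D k a2 b2 d2 x + c3 * D k a3 b3 d3 x := by
  have h := (((hasF_mon a1 b1 d1 x hx).const_mul c1).add
    ((hasF_mon a2 b2 d2 x hx).const_mul c2)).add ((hasF_mon a3 b3 d3 x hx).const_mul c3)
  rw [pd, (show comb c1 a1 b1 d1 c2 a2 b2 d2 c3 a3 b3 d3
      = fun y => c1 * mon a1 b1 d1 y + c2 * mon a2 b2 d2 y + c3 * mon a3 b3 d3 y from rfl),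
    HasFDerivAt.fderiv (f := fun y => c1 * mon a1 b1 d1 y + c2 * mon a2 b2 d2 y + c3 * mon a3 b3 d3 y) h]
  fin_cases k <;> simp [D, Lmon, prj, Pi.single_apply]

lemma u0_eq : uSWI 0 = comb 1 2 0 0 1 0 2 0 1 0 0 2 := by
  funext y; simp [uSWI, comb, mon, zpow_ofNat]
lemma u1_eq : uSWI 1 = comb 1 (-2) 0 0 0 0 0 0 0 0 0 0 := by
  funext y; simp [uSWI, comb, mon, zpow_neg, zpow_ofNat]
lemma u2_eq : uSWI 2 = comb 1 0 (-2) 0 0 0 0 0 0 0 0 0 := by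
  funext y; simp [uSWI, comb, mon, zpow_neg, zpow_ofNat]
lemma u3_eq : uSWI 3 = comb 1 0 0 (-2) 0 0 0 0 0 0 0 0 := by
  funext y; simp [uSWI, comb, mon, zpow_neg, zpow_ofNat]

lemma pd_congr {f g : (Fin 3 → ℝ) → ℝ} {x : Fin 3 → ℝ} (h : f =ᶠ[nhds x] g) (k : Fin 3) :
    pd k f x = pd k g x := by rw [pd, pd, h.fderiv_eq]

/-- Explicit closed form of the one-form `K^*(du^{(r)})`. -/
noncomputable def Gf (b₁ b₂ b₃ b₄ b₅ b₆ : ℝ) : Fin 4 → Fin 3 → (Fin 3 → ℝ) → ℝ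
  | 0, 0 => comb (2*b₁) 1 0 0 0 0 0 0 0 0 0 0
  | 0, 1 => comb (2*b₂) 0 1 0 0 0 0 0 0 0 0 0
  | 0, 2 => comb (2*b₃) 0 0 1 0 0 0 0 0 0 0 0
  | 1, 0 => comb (-2*b₁) (-3) 0 0 (-2*b₄) (-3) 2 0 (-2*b₅) (-3) 0 2
  | 1, 1 => comb (2*b₄) (-2) 1 0 0 0 0 0 0 0 0 0
  | 1, 2 => comb (2*b₅) (-2) 0 1 0 0 0 0 0 0 0 0
  | 2, 0 => comb (2*b₄) 1 (-2) 0 0 0 0 0 0 0 0 0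
  | 2, 1 => comb (-2*b₂) 0 (-3) 0 (-2*b₄) 2 (-3) 0 (-2*b₆) 0 (-3) 2
  | 2, 2 => comb (2*b₆) 0 (-2) 1 0 0 0 0 0 0 0 0
  | 3, 0 => comb (2*b₅) 1 0 (-2) 0 0 0 0 0 0 0 0
  | 3, 1 => comb (2*b₆) 0 1 (-2) 0 0 0 0 0 0 0 0
  | 3, 2 => comb (-2*b₃) 0 0 (-3) (-2*b₅) 2 0 (-3) (-2*b₆) 0 2 (-3)

lemma keyF (b₁ b₂ b₃ b₄ b₅ b₆ : ℝ) (r : Fin 4) (j : Fin 3) (y : Fin 3 → ℝ)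
    (hy : ∀ i, y i ≠ 0) :
    ∑ i, pd i (uSWI r) y * KSWI b₁ b₂ b₃ b₄ b₅ b₆ y i j = Gf b₁ b₂ b₃ b₄ b₅ b₆ r j y := by
  have h0 := hy 0; have h1 := hy 1; have h2 := hy 2
  obtain rfl | rfl | rfl | rfl : r = 0 ∨ r = 1 ∨ r = 2 ∨ r = 3 := by omega
  all_goals obtain rfl | rfl | rfl : j = 0 ∨ j = 1 ∨ j = 2 := by omega
  all_goals rw [Fin.sum_univ_three]
  all_goals simp only [u0_eq, u1_eq, u2_eq, u3_eq]
  all_goals rw [pd_comb 0 y hy, pd_comb 1 y hy, pd_comb 2 y hy]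
  all_goals simp [KSWI, Gf, comb, mon, D]
  all_goals try norm_num
  all_goals try field_simp [zpow_neg, zpow_ofNat]
  all_goals try ring

theorem stmt10 (b₁ b₂ b₃ b₄ b₅ b₆ : ℝ) :
    ∀ r : Fin 4, ∀ j k : Fin 3, ∀ x : Fin 3 → ℝ, (∀ i, x i ≠ 0) →
      pd k (fun y => ∑ i, pd i (uSWI r) y * KSWI b₁ b₂ b₃ b₄ b₅ b₆ y i j) x
        = pd j (fun y => ∑ i, pd i (uSWI r) y * KSWI b₁ b₂ b₃ b₄ b₅ b₆ y i k) x := by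
  intro r j k x hx
  have hne : ∀ᶠ y in nhds x, ∀ i, y i ≠ 0 :=
    Filter.eventually_all.2 fun i => (continuous_apply i).continuousAt.eventually_ne (hx i)
  have H : ∀ j' k' : Fin 3,
      pd k' (fun y => ∑ i, pd i (uSWI r) y * KSWI b₁ b₂ b₃ b₄ b₅ b₆ y i j') x
        = pd k' (Gf b₁ b₂ b₃ b₄ b₅ b₆ r j') x :=
    fun j' k' => pd_congr (hne.mono fun y hy => keyF b₁ b₂ b₃ b₄ b₅ b₆ r j' y hy) k'
  rw [H j k, H k j]
  obtain rfl | rfl | rfl | rfl : r = 0 ∨ r = 1 ∨ r = 2 ∨ r = 3 := by omega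
  all_goals obtain rfl | rfl | rfl : j = 0 ∨ j = 1 ∨ j = 2 := by omega
  all_goals obtain rfl | rfl | rfl : k = 0 ∨ k = 1 ∨ k = 2 := by omega
  all_goals simp only [Gf]
  all_goals rw [pd_comb _ x hx, pd_comb _ x hx]
  all_goals simp [D]
  all_goals try norm_num
  all_goals try ring
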